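/- Let r ≥ 3, n = p_1^{n_1}⋯p_r^{n_r} with primes p_1 < ... < p_r, a ∈ [r−1], n_r ≥ 3, and β defined as β_a^s = φ(n) + (n/(p_1⋯p_r))·(1/p_a^{s-1})·[ (p_1⋯p_r)/p_a + φ((p_1⋯p_r)/p_a)·(p_a^{s-1} − 2) ]. If 2·φ((p_1⋯p_r)/p_a) < (p_1⋯p_r)/p_a, then β_a^{n_a} > β_r^{n_r}. -/

import Mathlib

noncomputable def beta (r : ℕ) (p e : ℕ → ℕ) (a s : ℕ) : ℚ :=
  (Nat.totient (∏ i ∈ Finset.range r, p i ^ e i) : ℚ) +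
    ((∏ i ∈ Finset.range r, p i ^ e i : ℕ) : ℚ) /
        ((∏ i ∈ Finset.range r, p i : ℕ) : ℚ) *
      (1 / (p a : ℚ) ^ (s - 1)) *
      (((∏ i ∈ Finset.range r, p i : ℕ) : ℚ) / (p a : ℚ) +
        (Nat.totient ((∏ i ∈ Finset.range r, p i) / p a) : ℚ) *
          ((p a : ℚ) ^ (s - 1) - 2))

open Finset

-- telescoping bound: product of distinct naturals ≥ 2 is at most (card+1) * product of (q-1)
lemma aux_prod_le (n : ℕ) : ∀ T : Finset ℕ, T.card = n → (∀ q ∈ T, 2 ≤ q) →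
    ∏ q ∈ T, q ≤ (n + 1) * ∏ q ∈ T, (q - 1) := by
  induction n with
  | zero =>
    intro T hc _
    rw [Finset.card_eq_zero] at hc
    simp [hc]
  | succ n ih =>
    intro T hc h2
    have hne : T.Nonempty := Finset.card_pos.mp (by omega)
    set m := T.max' hne with hm
    have hmT : m ∈ T := T.max'_mem hne
    have hsub : T ⊆ Finset.Icc 2 m := by
      intro q hq
      exact Finset.mem_Icc.mpr ⟨h2 q hq, T.le_max' q hq⟩
    have hcard : T.card ≤ m - 1 := by
      have := Finset.card_le_card hsub
      simpa [Nat.card_Icc] using this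
    have hm2 : 2 ≤ m := h2 m hmT
    have hmge : n + 2 ≤ m := by omega
    have hih := ih (T.erase m) (by rw [Finset.card_erase_of_mem hmT, hc]; omega) 
      (fun q hq => h2 q (Finset.mem_of_mem_erase hq))
    rw [← Finset.mul_prod_erase T _ hmT, ← Finset.mul_prod_erase T (fun q => q - 1) hmT]
    calc m * ∏ q ∈ T.erase m, q ≤ m * ((n + 1) * ∏ q ∈ T.erase m, (q - 1)) :=
          Nat.mul_le_mul_left m hih
      _ ≤ (n + 1 + 1) * ((m - 1) * ∏ q ∈ T.erase m, (q - 1)) := by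
          have : m * (n + 1) ≤ (n + 2) * (m - 1) := by
            obtain ⟨k, hk⟩ : ∃ k, m = k + 2 := ⟨m - 2, by omega⟩
            rw [hk]
            nlinarith [Nat.add_sub_cancel (n:=k+1) (m:=1)]
          calc m * ((n + 1) * ∏ q ∈ T.erase m, (q - 1)) 
              = m * (n + 1) * ∏ q ∈ T.erase m, (q - 1) := by ring
            _ ≤ (n + 2) * (m - 1) * ∏ q ∈ T.erase m, (q - 1) := Nat.mul_le_mul_right _ this
            _ = (n + 1 + 1) * ((m - 1) * ∏ q ∈ T.erase m, (q - 1)) := by ring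

-- totient of a product of distinct primes
lemma aux_totient_prod (p : ℕ → ℕ) (S : Finset ℕ) (hp : ∀ i ∈ S, (p i).Prime)
    (hinj : ∀ i ∈ S, ∀ j ∈ S, p i = p j → i = j) :
    Nat.totient (∏ i ∈ S, p i) = ∏ i ∈ S, (p i - 1) := by
  induction S using Finset.induction_on with
  | empty => simp
  | @insert x S hxS ih =>
    rw [Finset.prod_insert hxS, Finset.prod_insert hxS]
    have hcop : Nat.Coprime (p x) (∏ i ∈ S, p i) := by
      apply Nat.Coprime.prod_right
      intro i hi
      exact (Nat.coprime_primes (hp x (Finset.mem_insert_self x S))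
        (hp i (Finset.mem_insert_of_mem hi))).mpr 
        (fun h => hxS (by rwa [hinj x (Finset.mem_insert_self x S) i (Finset.mem_insert_of_mem hi) h]))
    rw [Nat.totient_mul hcop, Nat.totient_prime (hp x (Finset.mem_insert_self x S)),
      ih (fun i hi => hp i (Finset.mem_insert_of_mem hi))
        (fun i hi j hj => hinj i (Finset.mem_insert_of_mem hi) j (Finset.mem_insert_of_mem hj))]

lemma aux_rat (r qa qR Q' Pi' : ℚ) (hr3 : 3 ≤ r) (hqa2 : 2 ≤ qa)
    (hqaR : qa + 1 ≤ qR) (hqRr : r + 1 ≤ qR) (hQ0 : 0 ≤ Q')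
    (hkeyQ : Pi' ≤ (r - 1) * Q') : qa * Pi' ≤ (qR - qa) * Q' * qR ^ 2 := by
  have h1 : qa * Pi' ≤ qa * ((r - 1) * Q') := mul_le_mul_of_nonneg_left hkeyQ (by linarith)
  have h2 : qa * (r - 1) ≤ (qR - 1) * (qR - 2) := by nlinarith
  have h3 : (qR - 1) * (qR - 2) * Q' ≤ qR ^ 2 * Q' := by nlinarith
  have h4 : qR ^ 2 * Q' ≤ (qR - qa) * Q' * qR ^ 2 := by
    nlinarith [mul_nonneg (mul_nonneg (by linarith : (0:ℚ) ≤ qR - qa - 1) hQ0) (sq_nonneg qR)]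
  nlinarith [mul_le_mul_of_nonneg_right h2 hQ0]


theorem stmt_16 (r : ℕ) (hr : 3 ≤ r) (p e : ℕ → ℕ)
    (hp : ∀ i < r, (p i).Prime)
    (hmono : ∀ i j, i < j → j < r → p i < p j)
    (he : ∀ i < r, 1 ≤ e i)
    (a : ℕ) (ha : a < r - 1) (her : 3 ≤ e (r - 1))
    (hphi : 2 * Nat.totient ((∏ i ∈ Finset.range r, p i) / p a) <
      (∏ i ∈ Finset.range r, p i) / p a) :
    beta r p e a (e a) > beta r p e (r - 1) (e (r - 1)) := by
  have hRr : r - 1 < r := by omega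
  have har : a < r := by omega
  have hpa := hp a har
  have hpR := hp (r - 1) hRr
  have hpaR : p a < p (r - 1) := hmono a (r - 1) ha hRr
  have hgrow : ∀ i, i < r → i + 2 ≤ p i := by
    intro i
    induction i with
    | zero => intro h; exact (hp 0 h).two_le
    | succ n ih =>
      intro h
      have h1 := ih (by omega)
      have := hmono n (n + 1) (by omega) h
      omega
  have hpRr : r + 1 ≤ p (r - 1) := by have := hgrow (r - 1) hRr; omega
  have hinj : ∀ i ∈ Finset.range r, ∀ j ∈ Finset.range r, p i = p j → i = j := by
    intro i hi j hj hpe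
    rw [Finset.mem_range] at hi hj
    by_contra hne
    rcases Nat.lt_or_ge i j with h | h
    · exact absurd hpe (Nat.ne_of_lt (hmono i j h hj))
    · exact absurd hpe.symm (Nat.ne_of_lt (hmono j i (by omega) hi))
  unfold beta
  set P := ∏ i ∈ Finset.range r, p i with hP
  set N := ∏ i ∈ Finset.range r, p i ^ e i with hN
  have hamem : a ∈ Finset.range r := Finset.mem_range.mpr har
  have hRmem : (r - 1) ∈ Finset.range r := Finset.mem_range.mpr hRr
  have hRmemS : (r - 1) ∈ (Finset.range r).erase a :=
    Finset.mem_erase.mpr ⟨by omega, hRmem⟩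
  have hamemSR : a ∈ (Finset.range r).erase (r - 1) :=
    Finset.mem_erase.mpr ⟨by omega, hamem⟩
  set S2 := ((Finset.range r).erase a).erase (r - 1) with hS2
  set Q := ∏ i ∈ S2, (p i - 1) with hQ
  set Pi := ∏ i ∈ S2, p i with hPi
  have hprodSa : ∏ i ∈ (Finset.range r).erase a, p i = p (r - 1) * Pi :=
    (Finset.mul_prod_erase _ _ hRmemS).symm
  have hprodSR : ∏ i ∈ (Finset.range r).erase (r - 1), p i = p a * Pi := by
    rw [← Finset.mul_prod_erase _ _ hamemSR, Finset.erase_right_comm]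
  have hprodSa' : ∏ i ∈ (Finset.range r).erase a, (p i - 1) = (p (r - 1) - 1) * Q :=
    (Finset.mul_prod_erase _ _ hRmemS).symm
  have hprodSR' : ∏ i ∈ (Finset.range r).erase (r - 1), (p i - 1) = (p a - 1) * Q := by
    rw [← Finset.mul_prod_erase _ (fun i => p i - 1) hamemSR, Finset.erase_right_comm]
  have hPa : P = p a * (p (r - 1) * Pi) := by
    rw [hP, ← Finset.mul_prod_erase _ _ hamem, hprodSa]
  have hPR : P = p (r - 1) * (p a * Pi) := by
    rw [hP, ← Finset.mul_prod_erase _ _ hRmem, hprodSR]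
  have hdivA : P / p a = p (r - 1) * Pi := by
    rw [hPa]; exact Nat.mul_div_cancel_left _ hpa.pos
  have hdivR : P / p (r - 1) = p a * Pi := by
    rw [hPR]; exact Nat.mul_div_cancel_left _ hpR.pos
  have hTa : Nat.totient (P / p a) = (p (r - 1) - 1) * Q := by
    rw [hdivA, ← hprodSa,
      aux_totient_prod p _ (fun i hi => hp i (Finset.mem_range.mp (Finset.mem_of_mem_erase hi)))
        (fun i hi j hj => hinj i (Finset.mem_of_mem_erase hi) j (Finset.mem_of_mem_erase hj)),
      hprodSa']
  have hTR : Nat.totient (P / p (r - 1)) = (p a - 1) * Q := by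
    rw [hdivR, ← hprodSR,
      aux_totient_prod p _ (fun i hi => hp i (Finset.mem_range.mp (Finset.mem_of_mem_erase hi)))
        (fun i hi j hj => hinj i (Finset.mem_of_mem_erase hi) j (Finset.mem_of_mem_erase hj)),
      hprodSR']
  -- key bound Pi ≤ (r-1) * Q
  have hinjS2 : ∀ i ∈ S2, ∀ j ∈ S2, p i = p j → i = j := fun i hi j hj =>
    hinj i (Finset.mem_of_mem_erase (Finset.mem_of_mem_erase hi)) j
      (Finset.mem_of_mem_erase (Finset.mem_of_mem_erase hj))
  have hcardS2 : S2.card = r - 2 := by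
    rw [hS2, Finset.card_erase_of_mem hRmemS, Finset.card_erase_of_mem hamem,
      Finset.card_range]
    omega
  have hkey : Pi ≤ (r - 1) * Q := by
    have himg1 : ∏ q ∈ S2.image p, q = Pi := Finset.prod_image hinjS2
    have himg2 : ∏ q ∈ S2.image p, (q - 1) = Q := Finset.prod_image hinjS2
    have hcard : (S2.image p).card = r - 2 := by
      rw [Finset.card_image_of_injOn (fun i hi j hj => hinjS2 i hi j hj), hcardS2]
    have h2 : ∀ q ∈ S2.image p, 2 ≤ q := by
      intro q hq
      obtain ⟨i, hi, rfl⟩ := Finset.mem_image.mp hq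
      exact (hp i (Finset.mem_range.mp (Finset.mem_of_mem_erase (Finset.mem_of_mem_erase hi)))).two_le
    have := aux_prod_le (r - 2) (S2.image p) hcard h2
    rw [himg1, himg2] at this
    have : Pi ≤ (r - 2 + 1) * Q := this
    have hrw : r - 2 + 1 = r - 1 := by omega
    rwa [hrw] at this
  -- positivity
  have hPpos : 0 < P := Finset.prod_pos fun i hi => (hp i (Finset.mem_range.mp hi)).pos
  have hNpos : 0 < N := Finset.prod_pos fun i hi =>
    pow_pos (hp i (Finset.mem_range.mp hi)).pos _
  have hQpos : 0 < Q := Finset.prod_pos fun i hi => by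
    have := (hp i (Finset.mem_range.mp (Finset.mem_of_mem_erase (Finset.mem_of_mem_erase hi)))).two_le
    omega
  have hPipos : 0 < Pi := Finset.prod_pos fun i hi =>
    (hp i (Finset.mem_range.mp (Finset.mem_of_mem_erase (Finset.mem_of_mem_erase hi)))).pos
  -- to ℚ
  have hqa0 : (0:ℚ) < (p a : ℚ) := by exact_mod_cast hpa.pos
  have hqR0 : (0:ℚ) < (p (r - 1) : ℚ) := by exact_mod_cast hpR.pos
  have hqa2 : (2:ℚ) ≤ (p a : ℚ) := by exact_mod_cast hpa.two_le
  have hqaR : (p a : ℚ) + 1 ≤ (p (r - 1) : ℚ) := by exact_mod_cast hpaR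
  have hqRr : (r : ℚ) + 1 ≤ (p (r - 1) : ℚ) := by exact_mod_cast hpRr
  have hr3 : (3:ℚ) ≤ (r : ℚ) := by exact_mod_cast hr
  have hQ0 : (0:ℚ) ≤ (Q : ℚ) := by positivity
  have hPi0 : (0:ℚ) ≤ (Pi : ℚ) := by positivity
  have hkeyQ : (Pi : ℚ) ≤ ((r : ℚ) - 1) * (Q : ℚ) := by
    have := hkey
    have h1 : ((r - 1 : ℕ) : ℚ) = (r : ℚ) - 1 := by
      rw [Nat.cast_sub (by omega)]; norm_num
    calc (Pi : ℚ) ≤ (((r - 1) * Q : ℕ) : ℚ) := by exact_mod_cast this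
      _ = ((r : ℚ) - 1) * (Q : ℚ) := by push_cast [Nat.cast_sub (show 1 ≤ r by omega)]; ring
  have hAa : (P : ℚ) / (p a : ℚ) = (p (r - 1) : ℚ) * (Pi : ℚ) := by
    rw [hPa]; push_cast; field_simp
  have hAR : (P : ℚ) / (p (r - 1) : ℚ) = (p a : ℚ) * (Pi : ℚ) := by
    rw [hPR]; push_cast; field_simp
  have hTaQ : ((Nat.totient (P / p a) : ℕ) : ℚ) = ((p (r - 1) : ℚ) - 1) * (Q : ℚ) := by
    rw [hTa]; push_cast [Nat.cast_sub hpR.one_le]; ring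
  have hTRQ : ((Nat.totient (P / p (r - 1)) : ℕ) : ℚ) = ((p a : ℚ) - 1) * (Q : ℚ) := by
    rw [hTR]; push_cast [Nat.cast_sub hpa.one_le]; ring
  -- the hypothesis in ℚ
  have hDa : 0 < (p (r - 1) : ℚ) * (Pi : ℚ) - 2 * (((p (r - 1) : ℚ) - 1) * (Q : ℚ)) := by
    rw [hTa, hdivA] at hphi
    have : ((2 * ((p (r - 1) - 1) * Q) : ℕ) : ℚ) < ((p (r - 1) * Pi : ℕ) : ℚ) := by
      exact_mod_cast hphi
    push_cast [Nat.cast_sub hpR.one_le] at this ⊢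
    linarith
  rw [gt_iff_lt]
  refine (add_lt_add_iff_left _).mpr ?_
  rw [mul_assoc, mul_assoc]
  refine mul_lt_mul_of_pos_left ?_ (div_pos (by exact_mod_cast hNpos) (by exact_mod_cast hPpos))
  rw [hTaQ, hTRQ, hAa, hAR]
  have hXform : ∀ (x T A : ℚ), 0 < x → (1 / x) * (A + T * (x - 2)) = T + (A - 2 * T) / x := by
    intro x T A hx
    field_simp
    ring
  have hpowa : (0:ℚ) < (p a : ℚ) ^ (e a - 1) := pow_pos hqa0 _
  have hpowR : (0:ℚ) < (p (r - 1) : ℚ) ^ (e (r - 1) - 1) := pow_pos hqR0 _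
  rw [hXform _ _ _ hpowR, hXform _ _ _ hpowa]
  -- chain
  set qa := (p a : ℚ)
  set qR := (p (r - 1) : ℚ)
  set Q' := (Q : ℚ)
  set Pi' := (Pi : ℚ)
  have hpow2 : qR ^ 2 ≤ qR ^ (e (r - 1) - 1) :=
    pow_le_pow_right₀ (by linarith) (by omega)
  have step1 : (qa * Pi' - 2 * ((qa - 1) * Q')) / qR ^ (e (r - 1) - 1) ≤
      (qa * Pi') / qR ^ 2 := by
    apply div_le_div₀ (by positivity) (by nlinarith) (by positivity) hpow2
  have step2 : (qa * Pi') / qR ^ 2 ≤ (qR - qa) * Q' := by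
    rw [div_le_iff₀ (by positivity)]
    exact aux_rat r qa qR Q' Pi' hr3 hqa2 hqaR hqRr hQ0 hkeyQ
  have step3 : ((qa - 1) * Q') + (qR - qa) * Q' = (qR - 1) * Q' := by ring
  have step4 : 0 < (qR * Pi' - 2 * ((qR - 1) * Q')) / qa ^ (e a - 1) :=
    div_pos hDa hpowa
  linarith
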